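/- Let $X$ be a Banach function space over $(S,\mu)$ that is order continuous, let $M$ be the Hardy–Littlewood maximal operator, and suppose the lattice maximal operator $\widetilde{M}$ is bounded on $L^p(\mathbb{R}^d;X)$ with norm $A$. Then for every $k \in \mathcal{K}$ and every simple $f : \mathbb{R}^d \to X$ one has the pointwise a.e. lattice inequality $|k * f| \leq \widetilde{M} f$, and consequently $\|k*f\|_{L^p(\mathbb{R}^d;X)} \leq A \|f\|_{L^p(\mathbb{R}^d;X)}$ uniformly in $k \in \mathcal{K}$. -/

import Mathlib

open MeasureTheory ENNReal Filter

/-- A Banach function space over a σ-finite measure space, modelled by its norm functional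
`N : (α → ℝ) → ℝ≥0∞` (with `N f = ∞` meaning `f ∉ X`): `N` is monotone in the pointwise order
on absolute values (compatibility and the ideal property), a norm, has a weak order unit, and
has the Fatou property. -/
structure BanachFunctionSpace (α : Type*) [MeasurableSpace α] (μ : Measure α) : Type _ where
  N : (α → ℝ) → ℝ≥0∞
  mono : ∀ {f g : α → ℝ}, (∀ᵐ x ∂μ, |f x| ≤ |g x|) → N f ≤ N g
  triangle : ∀ f g : α → ℝ, N (f + g) ≤ N f + N g
  norm_smul : ∀ (c : ℝ) (f : α → ℝ), N (c • f) = ENNReal.ofReal |c| * N f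
  eq_zero : ∀ f : α → ℝ, N f = 0 → ∀ᵐ x ∂μ, f x = 0
  weak_unit : ∃ ξ : α → ℝ, (∀ x, 0 < ξ x) ∧ N ξ < ∞
  fatou : ∀ (f : ℕ → α → ℝ) (g : α → ℝ), (∀ n x, 0 ≤ f n x) →
    (∀ x, Monotone fun n => f n x) →
    (∀ x, Tendsto (fun n => f n x) atTop (nhds (g x))) → N g = ⨆ n, N (f n)

/-- `(∑ j |v j|^s)^{1/s}` for `s ∈ [1,∞]` (supremum if `s = ∞`). -/
noncomputable def lpSumR (s : ℝ≥0∞) {n : ℕ} (v : Fin n → ℝ) : ℝ :=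
  if s = ∞ then ⨆ j, |v j| else (∑ j, |v j| ^ s.toReal) ^ (1 / s.toReal)

/-- `(∑ j (v j)^s)^{1/s}` in `ℝ≥0∞`, for `s ∈ [1,∞]` (supremum if `s = ∞`). -/
noncomputable def lpSumE (s : ℝ≥0∞) {n : ℕ} (v : Fin n → ℝ≥0∞) : ℝ≥0∞ :=
  if s = ∞ then ⨆ j, v j else (∑ j, v j ^ s.toReal) ^ (1 / s.toReal)

/-- `ℓ^s`-boundedness with constant `C` of a family `Γ` of operators, with respect to norm
functionals `NX`, `NY`. -/
def EllSBounded {α β : Type*} (NX : (α → ℝ) → ℝ≥0∞) (NY : (β → ℝ) → ℝ≥0∞)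
    (Γ : Set ((α → ℝ) → β → ℝ)) (s : ℝ≥0∞) (C : ℝ≥0∞) : Prop :=
  ∀ (n : ℕ) (T : Fin n → (α → ℝ) → β → ℝ), (∀ j, T j ∈ Γ) →
    ∀ f : Fin n → α → ℝ,
      NY (fun x => lpSumR s fun j => T j (f j) x) ≤ C * NX (fun x => lpSumR s fun j => f j x)

/-- `p`-convexity (constant `1`) of a norm functional, `p ∈ [1,∞]`. -/
def PConvex {α : Type*} (N : (α → ℝ) → ℝ≥0∞) (p : ℝ≥0∞) : Prop :=
  ∀ (n : ℕ) (ξ : Fin n → α → ℝ),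
    N (fun x => lpSumR p fun j => ξ j x) ≤ lpSumE p fun j => N (ξ j)

/-- Order continuity of a norm functional: `0 ≤ fₙ ↑ g` with `g` in the space implies
`N (g - fₙ) → 0`. -/
def OrderCont {α : Type*} (N : (α → ℝ) → ℝ≥0∞) : Prop :=
  ∀ (f : ℕ → α → ℝ) (g : α → ℝ), (∀ n x, 0 ≤ f n x) → (∀ x, Monotone fun n => f n x) →
    (∀ x, Tendsto (fun n => f n x) atTop (nhds (g x))) → N g < ∞ →
    Tendsto (fun n => N (g - f n)) atTop (nhds 0)

/-- The Köthe (associate) norm of the dual of a Banach function space with norm functional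
`N`, realized on measurable functions `u`. -/
noncomputable def kotheDual {α : Type*} [MeasurableSpace α] (μ : Measure α)
    (N : (α → ℝ) → ℝ≥0∞) (u : α → ℝ) : ℝ≥0∞ :=
  ⨆ f : {f : α → ℝ // N f ≤ 1}, ∫⁻ x, (‖f.1 x‖₊ : ℝ≥0∞) * ‖u x‖₊ ∂μ

/-- The norm functional of the `s`-concavification `X^s`. -/
noncomputable def concavification {α : Type*} (N : (α → ℝ) → ℝ≥0∞) (s : ℝ)
    (f : α → ℝ) : ℝ≥0∞ :=
  (N fun x => |f x| ^ (1 / s)) ^ s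

/-- `S` is the adjoint of `T` with respect to the integral pairings on `μ` and `ν`. -/
def IsAdjointOp {α β : Type*} [MeasurableSpace α] [MeasurableSpace β]
    (μ : Measure α) (ν : Measure β) (T : (α → ℝ) → β → ℝ) (S : (β → ℝ) → α → ℝ) : Prop :=
  ∀ (f : α → ℝ) (g : β → ℝ), ∫ x, T f x * g x ∂ν = ∫ x, f x * S g x ∂μ

/-- An axis-parallel cube in `ℝ^d`. -/
def IsCube {d : ℕ} (Q : Set (EuclideanSpace ℝ (Fin d))) : Prop :=
  ∃ (a : Fin d → ℝ) (r : ℝ), 0 < r ∧ Q = {x | ∀ i, x i ∈ Set.Icc (a i) (a i + r)}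

/-- The (uncentered, over cubes) Hardy–Littlewood maximal operator. -/
noncomputable def maximalOp {d : ℕ} (f : EuclideanSpace ℝ (Fin d) → ℂ)
    (x : EuclideanSpace ℝ (Fin d)) : ℝ≥0∞ :=
  ⨆ Q : {Q : Set (EuclideanSpace ℝ (Fin d)) // IsCube Q ∧ x ∈ Q},
    (∫⁻ y in Q.1, ‖f y‖₊) / volume Q.1

/-- The class `𝒦` of integrable kernels `k` with `|k| * |f| ≤ M f` a.e. for
all simple `f : ℝ^d → ℂ`. -/
def MemK {d : ℕ} (k : EuclideanSpace ℝ (Fin d) → ℝ) : Prop :=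
  Integrable k ∧ ∀ f : SimpleFunc (EuclideanSpace ℝ (Fin d)) ℂ,
    ∀ᵐ x, (∫⁻ y, ENNReal.ofReal |k (x - y)| * ‖f y‖₊) ≤ maximalOp (⇑f) x

/-- The lattice Hardy–Littlewood maximal operator `M̃`, for functions on `ℝ^d` with values in a
function lattice over `α`: the averages are taken pointwise in `α`. -/
noncomputable def latticeM {d : ℕ} {α : Type*}
    (f : EuclideanSpace ℝ (Fin d) → α → ℝ) (x : EuclideanSpace ℝ (Fin d)) (a : α) : ℝ≥0∞ :=
  ⨆ Q : {Q : Set (EuclideanSpace ℝ (Fin d)) // IsCube Q ∧ x ∈ Q},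
    (∫⁻ y in Q.1, ‖f y a‖₊) / volume Q.1

/-- The `L^p(ℝ^d;X)` norm of an `X`-valued function, `X` given by a norm functional `N`. -/
noncomputable def lpNormX {d : ℕ} {α : Type*} (N : (α → ℝ) → ℝ≥0∞) (p : ℝ)
    (f : EuclideanSpace ℝ (Fin d) → α → ℝ) : ℝ≥0∞ :=
  (∫⁻ x, (N (f x)) ^ p) ^ (1 / p)


open Classical in
noncomputable def cfAux {α : Type*} (F : Finset (α → ℝ)) (q : ↥F → ℚ) (w : α → ℝ) : ℝ :=
  if h : w ∈ F then max ((q ⟨w, h⟩ : ℚ) : ℝ) 0 else 0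

theorem cfAux_nonneg {α : Type*} (F : Finset (α → ℝ)) (q : ↥F → ℚ) (w : α → ℝ) :
    0 ≤ cfAux F q w := by
  unfold cfAux; split
  exacts [le_max_right _ _, le_rfl]

theorem ofReal_norm_eq_coe_nnnorm {E : Type*} [SeminormedAddCommGroup E] (a : E) :
    ENNReal.ofReal ‖a‖ = ((‖a‖₊ : NNReal) : ℝ≥0∞) := ofReal_norm a

/-- If `X` is an order continuous Banach function space and the lattice maximal operator `M̃` is
bounded on `L^p(ℝ^d;X)` with norm `A`, then for every `k ∈ 𝒦` and every simple `f : ℝ^d → X`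
one has `|k * f| ≤ M̃ f` pointwise a.e. (in the lattice sense), and consequently
`‖k * f‖_{L^p(ℝ^d;X)} ≤ A ‖f‖_{L^p(ℝ^d;X)}` uniformly in `k ∈ 𝒦`. -/
theorem convolution_le_latticeM {d : ℕ} {α : Type*} [MeasurableSpace α] {μ : Measure α}
    (X : BanachFunctionSpace α μ) (hXoc : OrderCont X.N)
    (p : ℝ) (hp : 1 < p) (A : ℝ≥0∞)
    (hM : ∀ f : EuclideanSpace ℝ (Fin d) → α → ℝ,
      lpNormX X.N p (fun x a => (latticeM f x a).toReal) ≤ A * lpNormX X.N p f)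
    (k : EuclideanSpace ℝ (Fin d) → ℝ) (hk : MemK k)
    (f : SimpleFunc (EuclideanSpace ℝ (Fin d)) (α → ℝ)) :
    (∀ᵐ x, ∀ᵐ a ∂μ,
      ENNReal.ofReal |∫ y, k (x - y) * f y a| ≤ latticeM (fun y => f y) x a) ∧
    lpNormX X.N p (fun x a => ∫ y, k (x - y) * f y a) ≤
      A * lpNormX X.N p (fun x => f x) := by
  classical
  obtain ⟨hki, hkM⟩ := hk
  -- rewrite latticeM with `ofReal ∘ abs` integrand
  have latticeM_eq : ∀ (x : EuclideanSpace ℝ (Fin d)) (a : α),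
      latticeM (fun y => f y) x a =
      ⨆ Q : {Q : Set (EuclideanSpace ℝ (Fin d)) // IsCube Q ∧ x ∈ Q},
        (∫⁻ y in Q.1, ENNReal.ofReal |f y a|) / volume Q.1 := by
    intro x a
    unfold latticeM
    refine iSup_congr fun Q => ?_
    congr 1
    refine lintegral_congr fun y => ?_
    show (‖f y a‖₊ : ℝ≥0∞) = ENNReal.ofReal |f y a|
    rw [← ofReal_norm_eq_coe_nnnorm, Real.norm_eq_abs]
  -- finiteness of latticeM on simple functions
  have fin : ∀ (x : EuclideanSpace ℝ (Fin d)) (a : α),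
      latticeM (fun y => f y) x a < ∞ := by
    intro x a
    have hb : latticeM (fun y => f y) x a ≤ ∑ w ∈ f.range, ENNReal.ofReal |w a| := by
      rw [latticeM_eq]
      refine iSup_le fun Q => ?_
      refine ENNReal.div_le_of_le_mul ?_
      calc ∫⁻ y in Q.1, ENNReal.ofReal |f y a|
          ≤ ∫⁻ _ in Q.1, ∑ w ∈ f.range, ENNReal.ofReal |w a| := by
            refine lintegral_mono fun y => ?_
            exact Finset.single_le_sum (f := fun w => ENNReal.ofReal |w a|)
              (fun w _ => zero_le) (f.mem_range_self y)
        _ = (∑ w ∈ f.range, ENNReal.ofReal |w a|) * volume Q.1 := setLIntegral_const _ _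
    exact lt_of_le_of_lt hb (ENNReal.sum_lt_top.2 fun w _ => ENNReal.ofReal_lt_top)
  -- key a.e. estimate for all rational coefficient vectors at once
  have key : ∀ᵐ x, ∀ q : (↥f.range → ℚ),
      (∫⁻ y, ENNReal.ofReal |k (x - y)| * ENNReal.ofReal (cfAux f.range q (f y))) ≤
      ⨆ Q : {Q : Set (EuclideanSpace ℝ (Fin d)) // IsCube Q ∧ x ∈ Q},
        (∫⁻ y in Q.1, ENNReal.ofReal (cfAux f.range q (f y))) / volume Q.1 := by
    rw [ae_all_iff]
    intro q
    have hmk := hkM (f.map fun w => ((cfAux f.range q w : ℝ) : ℂ))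
    filter_upwards [hmk] with x hx
    have hcoe : ∀ y, (‖(f.map fun w => ((cfAux f.range q w : ℝ) : ℂ)) y‖₊ : ℝ≥0∞) =
        ENNReal.ofReal (cfAux f.range q (f y)) := by
      intro y
      rw [SimpleFunc.map_apply, ← ofReal_norm_eq_coe_nnnorm, Complex.norm_real,
        Real.norm_eq_abs, abs_of_nonneg (cfAux_nonneg _ _ _)]
    calc (∫⁻ y, ENNReal.ofReal |k (x - y)| * ENNReal.ofReal (cfAux f.range q (f y)))
        = ∫⁻ y, ENNReal.ofReal |k (x - y)| *
            ‖(f.map fun w => ((cfAux f.range q w : ℝ) : ℂ)) y‖₊ := by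
          refine lintegral_congr fun y => ?_
          rw [hcoe y]
      _ ≤ maximalOp (⇑(f.map fun w => ((cfAux f.range q w : ℝ) : ℂ))) x := hx
      _ = ⨆ Q : {Q : Set (EuclideanSpace ℝ (Fin d)) // IsCube Q ∧ x ∈ Q},
            (∫⁻ y in Q.1, ENNReal.ofReal (cfAux f.range q (f y))) / volume Q.1 := by
          unfold maximalOp
          refine iSup_congr fun Q => ?_
          congr 1
          exact lintegral_congr fun y => hcoe y
  -- core estimate, for ALL a at a.e. x, by rational approximation from above
  have core : ∀ᵐ x, ∀ a : α,
      (∫⁻ y, ENNReal.ofReal |k (x - y)| * ENNReal.ofReal |f y a|) ≤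
        latticeM (fun y => f y) x a := by
    filter_upwards [key] with x hx a
    rw [latticeM_eq]
    refine ENNReal.le_of_forall_pos_le_add fun ε hε _ => ?_
    have hδ : (0 : ℝ) < (ε : ℝ) := hε
    choose q hq1 hq2 using fun w : ↥f.range =>
      exists_rat_btwn (lt_add_of_pos_right (|(w : α → ℝ) a|) hδ)
    have hcf1 : ∀ y, |f y a| ≤ cfAux f.range q (f y) := by
      intro y
      have hm : f y ∈ f.range := f.mem_range_self y
      unfold cfAux
      rw [dif_pos hm]
      exact le_max_of_le_left (le_of_lt (hq1 ⟨f y, hm⟩))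
    have hcf2 : ∀ y, ENNReal.ofReal (cfAux f.range q (f y)) ≤
        ENNReal.ofReal |f y a| + ENNReal.ofReal (ε : ℝ) := by
      intro y
      have hm : f y ∈ f.range := f.mem_range_self y
      have hle : cfAux f.range q (f y) ≤ |f y a| + (ε : ℝ) := by
        unfold cfAux
        rw [dif_pos hm]
        refine max_le (le_of_lt (hq2 ⟨f y, hm⟩)) ?_
        positivity
      exact le_trans (ENNReal.ofReal_le_ofReal hle) ENNReal.ofReal_add_le
    calc ∫⁻ y, ENNReal.ofReal |k (x - y)| * ENNReal.ofReal |f y a|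
        ≤ ∫⁻ y, ENNReal.ofReal |k (x - y)| * ENNReal.ofReal (cfAux f.range q (f y)) :=
          lintegral_mono fun y => mul_le_mul_right (ENNReal.ofReal_le_ofReal (hcf1 y)) _
      _ ≤ ⨆ Q : {Q : Set (EuclideanSpace ℝ (Fin d)) // IsCube Q ∧ x ∈ Q},
            (∫⁻ y in Q.1, ENNReal.ofReal (cfAux f.range q (f y))) / volume Q.1 := hx q
      _ ≤ (⨆ Q : {Q : Set (EuclideanSpace ℝ (Fin d)) // IsCube Q ∧ x ∈ Q},
            (∫⁻ y in Q.1, ENNReal.ofReal |f y a|) / volume Q.1) + (ε : ℝ≥0∞) := by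
          refine iSup_le fun Q => ?_
          have h1 : (∫⁻ y in Q.1, ENNReal.ofReal (cfAux f.range q (f y))) ≤
              (∫⁻ y in Q.1, ENNReal.ofReal |f y a|) + ENNReal.ofReal (ε : ℝ) * volume Q.1 := by
            calc ∫⁻ y in Q.1, ENNReal.ofReal (cfAux f.range q (f y))
                ≤ ∫⁻ y in Q.1, (ENNReal.ofReal |f y a| + ENNReal.ofReal (ε : ℝ)) :=
                  lintegral_mono fun y => hcf2 y
              _ = (∫⁻ y in Q.1, ENNReal.ofReal |f y a|) + ENNReal.ofReal (ε : ℝ) * volume Q.1 := by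
                  rw [lintegral_add_right _ measurable_const, setLIntegral_const]
          calc (∫⁻ y in Q.1, ENNReal.ofReal (cfAux f.range q (f y))) / volume Q.1
              ≤ ((∫⁻ y in Q.1, ENNReal.ofReal |f y a|) +
                  ENNReal.ofReal (ε : ℝ) * volume Q.1) / volume Q.1 :=
                ENNReal.div_le_div_right h1 _
            _ = (∫⁻ y in Q.1, ENNReal.ofReal |f y a|) / volume Q.1 +
                (ENNReal.ofReal (ε : ℝ) * volume Q.1) / volume Q.1 := ENNReal.add_div
            _ ≤ (⨆ Q' : {Q : Set (EuclideanSpace ℝ (Fin d)) // IsCube Q ∧ x ∈ Q},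
                  (∫⁻ y in Q'.1, ENNReal.ofReal |f y a|) / volume Q'.1) + (ε : ℝ≥0∞) := by
                refine add_le_add (le_iSup (fun Q' :
                    {Q : Set (EuclideanSpace ℝ (Fin d)) // IsCube Q ∧ x ∈ Q} =>
                    (∫⁻ y in Q'.1, ENNReal.ofReal |f y a|) / volume Q'.1) Q) ?_
                refine le_trans (ENNReal.div_le_of_le_mul le_rfl) ?_
                rw [ENNReal.ofReal_coe_nnreal]
  -- pointwise bound for the convolution
  have part1 : ∀ᵐ x, ∀ a : α,
      ENNReal.ofReal |∫ y, k (x - y) * f y a| ≤ latticeM (fun y => f y) x a := by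
    filter_upwards [core] with x hx a
    refine le_trans ?_ (hx a)
    calc ENNReal.ofReal |∫ y, k (x - y) * f y a|
        ≤ ∫⁻ y, ‖k (x - y) * f y a‖₊ := by
          rw [← Real.norm_eq_abs, ofReal_norm_eq_coe_nnnorm]
          exact enorm_integral_le_lintegral_enorm _
      _ = ∫⁻ y, ENNReal.ofReal |k (x - y)| * ENNReal.ofReal |f y a| := by
          refine lintegral_congr fun y => ?_
          rw [nnnorm_mul, ENNReal.coe_mul, ← ofReal_norm_eq_coe_nnnorm,
            ← ofReal_norm_eq_coe_nnnorm, Real.norm_eq_abs, Real.norm_eq_abs]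
  constructor
  · filter_upwards [part1] with x hx
    exact Filter.Eventually.of_forall hx
  · refine le_trans ?_ (hM fun x => f x)
    unfold lpNormX
    have hp0 : (0 : ℝ) < p := lt_trans one_pos hp
    refine ENNReal.rpow_le_rpow ?_ (le_of_lt (by positivity))
    refine lintegral_mono_ae ?_
    filter_upwards [part1] with x hx
    refine ENNReal.rpow_le_rpow ?_ (le_of_lt hp0)
    refine X.mono (Filter.Eventually.of_forall fun a => ?_)
    have h1 := hx a
    have h2 := fin x a
    have h3 : |∫ y, k (x - y) * f y a| ≤ (latticeM (fun y => f y) x a).toReal := by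
      have h4 := ENNReal.toReal_mono h2.ne h1
      rwa [ENNReal.toReal_ofReal (abs_nonneg _)] at h4
    calc |(fun a => ∫ y, k (x - y) * f y a) a|
        ≤ (latticeM (fun y => f y) x a).toReal := h3
      _ ≤ |(fun a => (latticeM (fun y => f y) x a).toReal) a| := le_abs_self _
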